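/- Let X be a colorable d-pseudomanifold on a finite vertex set V, i.e., there exists a map χ : V → {1,…,d+1} that is injective on every facet of X. Then for every map δ : V → {1,2}, the number of facets of X on which δ is constant (the δ-monochromatic facets) is even. -/

import Mathlib

attribute [local instance] Classical.propDecidable

private def IsGood {V : Type} {d : ℕ} (χ : V → Fin (d + 1)) (δ : V → Fin 2)
    (F : Finset V) (v : V) : Prop :=
  ∀ w ∈ F, w ≠ v → (χ v < χ w ↔ δ w = 1)

private lemma fin2_cases (a : Fin 2) : a = 0 ∨ a = 1 := by fin_cases a <;> simp

private lemma good_char {V : Type} {d : ℕ} (χ : V → Fin (d + 1)) (δ : V → Fin 2)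
    (F : Finset V) (hinj : Set.InjOn χ F) {v : V} (hv : v ∈ F) :
    IsGood χ δ F v ↔
      ((∀ w ∈ F, δ w = 0 → χ w ≤ χ v) ∧ (∀ w ∈ F, δ w = 1 → χ v ≤ χ w)) := by
  constructor
  · intro h
    constructor
    · intro w hw hw0
      by_cases hwv : w = v
      · subst hwv; exact le_refl _
      · by_contra hlt
        push_neg at hlt
        have := (h w hw hwv).mp hlt
        rw [hw0] at this
        exact absurd this (by decide)
    · intro w hw hw1
      by_cases hwv : w = v
      · subst hwv; exact le_refl _
      · exact le_of_lt ((h w hw hwv).mpr hw1)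
  · rintro ⟨h0, h1⟩ w hw hwv
    constructor
    · intro hlt
      rcases fin2_cases (δ w) with h | h
      · exact absurd (h0 w hw h) (not_le.mpr hlt)
      · exact h
    · intro hw1
      have hle := h1 w hw hw1
      have hne : χ v ≠ χ w := fun hc => hwv (hinj hw hv hc.symm)
      exact lt_of_le_of_ne hle hne

private lemma facet_parity {V : Type} [DecidableEq V] {d : ℕ} (χ : V → Fin (d + 1))
    (δ : V → Fin 2) (F : Finset V) (hFcard : F.card = d + 1) (hinj : Set.InjOn χ F) :
    (F.filter (IsGood χ δ F)).card % 2
      = if (∀ x ∈ F, ∀ y ∈ F, δ x = δ y) then 1 else 0 := by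
  have hFne : F.Nonempty := Finset.card_pos.mp (by omega)
  by_cases hmono : ∀ x ∈ F, ∀ y ∈ F, δ x = δ y
  · rw [if_pos hmono]
    obtain ⟨x₀, hx₀⟩ := id hFne
    rcases fin2_cases (δ x₀) with h0 | h1
    · have hall : ∀ w ∈ F, δ w = 0 := fun w hw => (hmono w hw x₀ hx₀).trans h0
      obtain ⟨a, haF, hamax⟩ := F.exists_max_image χ hFne
      have heq : F.filter (IsGood χ δ F) = {a} := by
        ext v
        simp only [Finset.mem_filter, Finset.mem_singleton]
        constructor
        · rintro ⟨hvF, hgood⟩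
          have hc := (good_char χ δ F hinj hvF).mp hgood
          exact hinj hvF haF (le_antisymm (hamax v hvF) (hc.1 a haF (hall a haF)))
        · rintro rfl
          refine ⟨haF, (good_char χ δ F hinj haF).mpr ⟨fun w hw _ => hamax w hw, ?_⟩⟩
          intro w hw hw1
          rw [hall w hw] at hw1
          exact absurd hw1 (by decide)
      rw [heq, Finset.card_singleton]
    · have hall : ∀ w ∈ F, δ w = 1 := fun w hw => (hmono w hw x₀ hx₀).trans h1
      obtain ⟨a, haF, hamin⟩ := F.exists_min_image χ hFne
      have heq : F.filter (IsGood χ δ F) = {a} := by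
        ext v
        simp only [Finset.mem_filter, Finset.mem_singleton]
        constructor
        · rintro ⟨hvF, hgood⟩
          have hc := (good_char χ δ F hinj hvF).mp hgood
          exact hinj hvF haF (le_antisymm (hc.2 a haF (hall a haF)) (hamin v hvF))
        · rintro rfl
          refine ⟨haF, (good_char χ δ F hinj haF).mpr ⟨?_, fun w hw _ => hamin w hw⟩⟩
          intro w hw hw0
          rw [hall w hw] at hw0
          exact absurd hw0 (by decide)
      rw [heq, Finset.card_singleton]
  · rw [if_neg hmono]
    push_neg at hmono
    obtain ⟨x, hx, y, hy, hxy⟩ := hmono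
    have hab : ∃ a ∈ F, ∃ b ∈ F, δ a = 0 ∧ δ b = 1 := by
      rcases fin2_cases (δ x) with h | h <;> rcases fin2_cases (δ y) with h' | h'
      · exact absurd (h.trans h'.symm) hxy
      · exact ⟨x, hx, y, hy, h, h'⟩
      · exact ⟨y, hy, x, hx, h', h⟩
      · exact absurd (h.trans h'.symm) hxy
    obtain ⟨a, haF, b, hbF, ha0, hb1⟩ := hab
    obtain ⟨p, hp, hpmax⟩ := (F.filter (fun w => δ w = 0)).exists_max_image χ
      ⟨a, Finset.mem_filter.mpr ⟨haF, ha0⟩⟩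
    obtain ⟨q, hq, hqmin⟩ := (F.filter (fun w => δ w = 1)).exists_min_image χ
      ⟨b, Finset.mem_filter.mpr ⟨hbF, hb1⟩⟩
    rw [Finset.mem_filter] at hp hq
    have hpq : p ≠ q := by
      intro h
      rw [h] at hp
      rw [hq.2] at hp
      exact absurd hp.2 (by decide)
    have hχpq : χ p ≠ χ q := fun h => hpq (hinj hp.1 hq.1 h)
    have hchar : ∀ v ∈ F, (IsGood χ δ F v ↔ (χ p ≤ χ v ∧ χ v ≤ χ q)) := by
      intro v hv
      rw [good_char χ δ F hinj hv]
      constructor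
      · rintro ⟨h0, h1⟩
        exact ⟨h0 p hp.1 hp.2, h1 q hq.1 hq.2⟩
      · rintro ⟨h0, h1⟩
        refine ⟨fun w hw hw0 => le_trans (hpmax w (Finset.mem_filter.mpr ⟨hw, hw0⟩)) h0,
          fun w hw hw1 => le_trans h1 (hqmin w (Finset.mem_filter.mpr ⟨hw, hw1⟩))⟩
    rcases lt_or_gt_of_ne hχpq with hlt | hgt
    · have heq : F.filter (IsGood χ δ F) = {p, q} := by
        ext v
        simp only [Finset.mem_filter, Finset.mem_insert, Finset.mem_singleton]
        constructor
        · rintro ⟨hvF, hgood⟩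
          have hc := (hchar v hvF).mp hgood
          rcases fin2_cases (δ v) with h | h
          · exact Or.inl (hinj hvF hp.1
              (le_antisymm (hpmax v (Finset.mem_filter.mpr ⟨hvF, h⟩)) hc.1))
          · exact Or.inr (hinj hvF hq.1
              (le_antisymm hc.2 (hqmin v (Finset.mem_filter.mpr ⟨hvF, h⟩))))
        · rintro (rfl | rfl)
          · exact ⟨hp.1, (hchar v hp.1).mpr ⟨le_refl _, le_of_lt hlt⟩⟩
          · exact ⟨hq.1, (hchar v hq.1).mpr ⟨le_of_lt hlt, le_refl _⟩⟩
      rw [heq, Finset.card_pair hpq]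
    · have heq : F.filter (IsGood χ δ F) = ∅ := by
        ext v
        simp only [Finset.mem_filter, Finset.notMem_empty, iff_false, not_and]
        intro hvF hgood
        have hc := (hchar v hvF).mp hgood
        exact absurd (le_trans hc.1 hc.2) (not_le.mpr hgt)
      rw [heq, Finset.card_empty]

/-- If `X` is a colorable `d`-pseudomanifold (there is a `(d+1)`-coloring `χ` injective
on every facet), then for every `2`-coloring `δ` of the vertices the number of
`δ`-monochromatic facets is even. -/
theorem stmt_12 (V : Type) [Fintype V] [DecidableEq V] (d : ℕ)
    (X : Finset (Finset V))
    (hdown : ∀ A ∈ X, ∀ B ⊆ A, B ∈ X)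
    (hdim : ∀ A ∈ X, A.card ≤ d + 1)
    (hpure : ∀ A ∈ X, ∃ F ∈ X, A ⊆ F ∧ F.card = d + 1)
    (hpsm : ∀ B ∈ X, B.card = d →
      (X.filter (fun F => B ⊆ F ∧ F.card = d + 1)).card = 2)
    (hcolorable : ∃ χ : V → Fin (d + 1),
      ∀ F ∈ X, F.card = d + 1 → Set.InjOn χ (F : Set V))
    (δ : V → Fin 2) :
    Even (X.filter (fun F : Finset V =>
      F.card = d + 1 ∧ ∀ x ∈ F, ∀ y ∈ F, δ x = δ y)).card := by
  classical
  obtain ⟨χ, hχ⟩ := hcolorable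
  set Fs : Finset (Finset V) := X.filter (fun F => F.card = d + 1) with hFs
  -- rewrite the target as a sum of indicators over facets
  have htarget : (X.filter (fun F : Finset V =>
      F.card = d + 1 ∧ ∀ x ∈ F, ∀ y ∈ F, δ x = δ y)).card
      = ∑ F ∈ Fs, (if (∀ x ∈ F, ∀ y ∈ F, δ x = δ y) then 1 else 0) := by
    rw [hFs, ← Finset.filter_filter, Finset.card_filter]
  set T : ℕ := ∑ F ∈ Fs, (F.filter (IsGood χ δ F)).card with hT
  have hparts : ∀ F ∈ Fs, (F.filter (IsGood χ δ F)).card % 2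
      = (if (∀ x ∈ F, ∀ y ∈ F, δ x = δ y) then 1 else 0) % 2 := by
    intro F hF
    rw [Finset.mem_filter] at hF
    rw [facet_parity χ δ F hF.2 (hχ F hF.1 hF.2)]
    split <;> rfl
  have step1 : T % 2 = (∑ F ∈ Fs, (if (∀ x ∈ F, ∀ y ∈ F, δ x = δ y) then 1 else 0)) % 2 := by
    rw [hT, Finset.sum_nat_mod, Finset.sum_congr rfl hparts, ← Finset.sum_nat_mod]
  -- the set of good pairs (facet, vertex)
  set P : Finset ((Finset V) × V) :=
    Fs.biUnion (fun F => (F.filter (IsGood χ δ F)).image (fun v => (F, v))) with hP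
  have hPmem : ∀ p : (Finset V) × V,
      p ∈ P ↔ p.1 ∈ Fs ∧ p.2 ∈ p.1 ∧ IsGood χ δ p.1 p.2 := by
    intro p
    simp only [hP, Finset.mem_biUnion, Finset.mem_image, Finset.mem_filter]
    constructor
    · rintro ⟨F, hF, v, ⟨hv, hgood⟩, rfl⟩
      exact ⟨hF, hv, hgood⟩
    · rintro ⟨hF, hv, hgood⟩
      exact ⟨p.1, hF, p.2, ⟨hv, hgood⟩, rfl⟩
  have hPcard : P.card = T := by
    rw [hP, Finset.card_biUnion]
    · exact Finset.sum_congr rfl (fun F _ =>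
        Finset.card_image_of_injective _ (fun a b h => (Prod.mk.injEq _ _ _ _ ▸ h : _ ∧ _).2))
    · intro F hF G hG hFG
      rw [Function.onFun, Finset.disjoint_left]
      rintro p hpF hpG
      rw [Finset.mem_image] at hpF hpG
      obtain ⟨v, _, rfl⟩ := hpF
      obtain ⟨w, _, hw⟩ := hpG
      exact hFG ((Prod.mk.injEq _ _ _ _ ▸ hw.symm : _ ∧ _).1)
  -- group the good pairs by their doors
  have hfib : P.card = ∑ B ∈ P.image (fun p => p.1.erase p.2),
      (P.filter (fun p => p.1.erase p.2 = B)).card :=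
    Finset.card_eq_sum_card_fiberwise (fun p hp => Finset.mem_image_of_mem _ hp)
  have hfib2 : ∀ B ∈ P.image (fun p => p.1.erase p.2),
      (P.filter (fun p => p.1.erase p.2 = B)).card = 2 := by
    intro B hB
    rw [Finset.mem_image] at hB
    obtain ⟨⟨F₀, v₀⟩, hp₀P, hp₀B⟩ := hB
    obtain ⟨hF₀, hv₀F₀, hgood₀⟩ := (hPmem _).mp hp₀P
    rw [Finset.mem_filter] at hF₀
    simp only at hv₀F₀ hgood₀ hp₀B
    have hBF₀ : B ⊆ F₀ := hp₀B ▸ Finset.erase_subset _ _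
    have hv₀B : v₀ ∉ B := hp₀B ▸ Finset.notMem_erase _ _
    have hBX : B ∈ X := hdown F₀ hF₀.1 B hBF₀
    have hBcard : B.card = d := by
      have := Finset.card_erase_of_mem hv₀F₀
      rw [hp₀B, hF₀.2] at this
      omega
    have hinj₀ : Set.InjOn χ F₀ := hχ F₀ hF₀.1 hF₀.2
    have hχB : (B.image χ).card = d := by
      rw [Finset.card_image_of_injOn (hinj₀.mono (Finset.coe_subset.mpr hBF₀)), hBcard]
    have hmissing : ∀ (F : Finset V) (v : V), F ∈ X → F.card = d + 1 → v ∈ F →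
        F.erase v = B → χ v ∉ B.image χ := by
      intro F v hFX hFc hvF hFB hmem
      rw [Finset.mem_image] at hmem
      obtain ⟨w, hwB, hwv⟩ := hmem
      have hwF : w ∈ F := hFB ▸ hwB |> (Finset.erase_subset _ _)
      have : w = v := hχ F hFX hFc hwF hvF hwv
      rw [← hFB] at hwB
      exact Finset.notMem_erase v F (this ▸ hwB)
    have huniq : ∀ m m' : Fin (d + 1), m ∉ B.image χ → m' ∉ B.image χ → m = m' := by
      intro m m' hm hm'
      have h1 : (Finset.univ \ B.image χ).card ≤ 1 := by
        rw [Finset.card_sdiff_of_subset (Finset.subset_univ _), Finset.card_univ, Fintype.card_fin, hχB]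
        omega
      exact Finset.card_le_one.mp h1 m
        (Finset.mem_sdiff.mpr ⟨Finset.mem_univ _, hm⟩) m'
        (Finset.mem_sdiff.mpr ⟨Finset.mem_univ _, hm'⟩)
    have key : ∀ (F : Finset V) (v : V), F ∈ X → F.card = d + 1 → v ∈ F →
        F.erase v = B → IsGood χ δ F v := by
      intro F v hFX hFc hvF hFB
      have hmv : χ v = χ v₀ :=
        huniq _ _ (hmissing F v hFX hFc hvF hFB) (hmissing F₀ v₀ hF₀.1 hF₀.2 hv₀F₀ hp₀B)
      intro w hw hwv
      have hwB : w ∈ B := hFB ▸ Finset.mem_erase.mpr ⟨hwv, hw⟩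
      rw [hmv]
      exact hgood₀ w (hBF₀ hwB) (fun h => hv₀B (h ▸ hwB))
    refine (Finset.card_bij (fun (p : (Finset V) × V) _ => p.1) ?_ ?_ ?_).trans
      (hpsm B hBX hBcard)
    · rintro p hp
      rw [Finset.mem_filter] at hp
      obtain ⟨hFp, hvp, _⟩ := (hPmem _).mp hp.1
      rw [Finset.mem_filter] at hFp
      exact Finset.mem_filter.mpr ⟨hFp.1, hp.2 ▸ Finset.erase_subset _ _, hFp.2⟩
    · rintro ⟨F, v⟩ hp ⟨F', v'⟩ hp' h
      simp only at h
      subst h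
      rw [Finset.mem_filter] at hp hp'
      obtain ⟨_, hv, _⟩ := (hPmem _).mp hp.1
      simp only at hv
      have hB : F.erase v = F.erase v' := hp.2.trans hp'.2.symm
      have : v = v' := by
        by_contra hne
        have : v ∈ F.erase v' := Finset.mem_erase.mpr ⟨hne, hv⟩
        rw [← hB] at this
        exact Finset.notMem_erase v F this
      rw [this]
    · intro F hF
      rw [Finset.mem_filter] at hF
      obtain ⟨hFX, hBF, hFc⟩ := hF
      have hcard1 : (F \ B).card = 1 := by
        rw [Finset.card_sdiff_of_subset hBF, hFc, hBcard]
        omega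
      obtain ⟨v, hv⟩ := Finset.card_eq_one.mp hcard1
      have hvF : v ∈ F := (Finset.mem_sdiff.mp (hv ▸ Finset.mem_singleton_self v)).1
      have hvB : v ∉ B := (Finset.mem_sdiff.mp (hv ▸ Finset.mem_singleton_self v)).2
      have hFB : F.erase v = B := by
        ext w
        rw [Finset.mem_erase]
        constructor
        · rintro ⟨hwv, hwF⟩
          by_contra hwB
          have : w ∈ F \ B := Finset.mem_sdiff.mpr ⟨hwF, hwB⟩
          rw [hv, Finset.mem_singleton] at this
          exact hwv this
        · intro hwB
          exact ⟨fun h => hvB (h ▸ hwB), hBF hwB⟩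
      refine ⟨(F, v), Finset.mem_filter.mpr ⟨(hPmem _).mpr ⟨?_, hvF, key F v hFX hFc hvF hFB⟩, hFB⟩, rfl⟩
      exact Finset.mem_filter.mpr ⟨hFX, hFc⟩
  have step2 : Even T := by
    rw [← hPcard, hfib, Finset.sum_congr rfl hfib2, Finset.sum_const, smul_eq_mul]
    exact even_two.mul_left _
  rw [Nat.even_iff] at step2 ⊢
  rw [htarget, ← step1, step2]
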